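/- Let j : K → L be a Dwyer map of posets and f : K → X a monotone map, and let Y be the explicit pushout of j along f. Then the inclusion k : X → Y is a Dwyer map. -/

import Mathlib

/-!
Statement 2: if `j : K → L` is a Dwyer map of posets and `f : K → X` is monotone,
then in the explicit pushout `Y` the inclusion `k : X → Y` is a Dwyer map.
(The pushout is given by the explicit relation `pushLE`; the statement is phrased
for any poset `Y` order-isomorphic to the explicit pushout.)
-/

universe u v w

/-- A sieve in a poset: a downward closed subset. -/
def IsSieve {α : Type*} [PartialOrder α] (A : Set α) : Prop :=
  ∀ ⦃x y : α⦄, x ≤ y → y ∈ A → x ∈ A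

/-- A cosieve in a poset: an upward closed subset. -/
def IsCosieve {α : Type*} [PartialOrder α] (A : Set α) : Prop :=
  ∀ ⦃x y : α⦄, x ≤ y → x ∈ A → y ∈ A

/-- The inclusion of a subset `A` of a poset is a Dwyer map: `A` is a sieve and
there is a cosieve `T ⊇ A` and a monotone retraction `r : T → A` with `r a = a`
for `a ∈ A` and `r t ≤ t` for `t ∈ T`. -/
def IsDwyerIncl {α : Type*} [PartialOrder α] (A : Set α) : Prop :=
  IsSieve A ∧ ∃ T : Set α, A ⊆ T ∧ IsCosieve T ∧
    ∃ r : T → α, Monotone r ∧ (∀ t : T, r t ∈ A) ∧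
      (∀ t : T, (t : α) ∈ A → r t = (t : α)) ∧ (∀ t : T, r t ≤ (t : α))

/-- The underlying type `(L \ K) ⊔ X` of the explicit pushout. -/
def PushY {L : Type u} (K : Set L) (X : Type v) : Type (max u v) :=
  {l : L // l ∉ K} ⊕ X

/-- The order relation on the explicit pushout. -/
def pushLE {L : Type u} [PartialOrder L] (K : Set L) {X : Type v} [PartialOrder X]
    (f : K → X) : PushY K X → PushY K X → Prop
  | Sum.inl y₁, Sum.inl y₂ => y₁.1 ≤ y₂.1
  | Sum.inl _, Sum.inr _ => False
  | Sum.inr x, Sum.inl y => ∃ w : K, x ≤ f w ∧ (w : L) ≤ y.1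
  | Sum.inr x₁, Sum.inr x₂ => x₁ ≤ x₂

open Classical in
noncomputable def pushRetr {L : Type u} [PartialOrder L] {X : Type v} [PartialOrder X]
    {Y : Type w} (K : Set L) (TL : Set L) (f : K → X) (rL : TL → L)
    (hrmem : ∀ t : TL, rL t ∈ K) (e : PushY K X ≃ Y) (t : Y) : Y :=
  match e.symm t with
  | Sum.inl z => if h : z.1 ∈ TL then e (Sum.inr (f ⟨rL ⟨z.1, h⟩, hrmem _⟩)) else t
  | Sum.inr _ => t

theorem pushRetr_inl {L : Type u} [PartialOrder L] {X : Type v} [PartialOrder X]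
    {Y : Type w} (K : Set L) (TL : Set L) (f : K → X) (rL : TL → L)
    (hrmem : ∀ t : TL, rL t ∈ K) (e : PushY K X ≃ Y) (z : {l : L // l ∉ K})
    (hz : z.1 ∈ TL) :
    pushRetr K TL f rL hrmem e (e (Sum.inl z)) = e (Sum.inr (f ⟨rL ⟨z.1, hz⟩, hrmem _⟩)) := by
  unfold pushRetr
  rw [Equiv.symm_apply_apply e (Sum.inl z)]
  simp [hz]

theorem pushRetr_inr {L : Type u} [PartialOrder L] {X : Type v} [PartialOrder X]
    {Y : Type w} (K : Set L) (TL : Set L) (f : K → X) (rL : TL → L)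
    (hrmem : ∀ t : TL, rL t ∈ K) (e : PushY K X ≃ Y) (x : X) :
    pushRetr K TL f rL hrmem e (e (Sum.inr x)) = e (Sum.inr x) := by
  unfold pushRetr
  rw [Equiv.symm_apply_apply e (Sum.inr x)]

theorem statement2 {L : Type u} [PartialOrder L] {X : Type v} [PartialOrder X]
    (K : Set L) (hK : IsDwyerIncl K) (f : K → X) (hf : Monotone f)
    -- `Y` is any poset realizing the explicit pushout of `j` along `f`
    (Y : Type w) [PartialOrder Y] (e : PushY K X ≃ Y)
    (he : ∀ a b : PushY K X, pushLE K f a b ↔ e a ≤ e b) :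
    -- the inclusion `k : X → Y` is a Dwyer map
    IsDwyerIncl (Set.range fun x : X => e (Sum.inr x)) := by
  classical
  obtain ⟨hsK, TL, hKTL, hcosL, rL, hmL, hrmem, hrid, hrle⟩ := hK
  have hsymm : ∀ y : Y, e (e.symm y) = y := e.apply_symm_apply
  constructor
  · -- sieve
    intro a b hab hb
    obtain ⟨x, hx⟩ := hb
    obtain ⟨p, rfl⟩ : ∃ p : PushY K X, a = e p := ⟨e.symm a, (hsymm a).symm⟩
    cases p with
    | inl z =>
      exfalso
      have hb' : e (Sum.inr x) = b := hx
      have : pushLE K f (Sum.inl z) (Sum.inr x) := (he _ _).mpr (by rw [hb']; exact hab)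
      exact this
    | inr x' => exact ⟨x', rfl⟩
  · refine ⟨{t : Y | ∀ z, e.symm t = Sum.inl z → z.1 ∈ TL}, ?_, ?_, ?_⟩
    · rintro _ ⟨x, rfl⟩ z hz
      rw [Equiv.symm_apply_apply e (Sum.inr x)] at hz
      cases hz
    · -- cosieve
      intro a b hab ha z hz
      obtain ⟨p, rfl⟩ : ∃ p : PushY K X, a = e p := ⟨e.symm a, (hsymm a).symm⟩
      have hb : b = e (Sum.inl z) := by rw [← hz, hsymm]
      subst hb
      have hle : pushLE K f p (Sum.inl z) := (he _ _).mpr hab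
      cases p with
      | inl z' =>
        have hz' : z'.1 ∈ TL := ha z' (Equiv.symm_apply_apply _ _)
        exact hcosL hle hz'
      | inr x =>
        obtain ⟨w, _, hwz⟩ := hle
        exact hcosL hwz (hKTL w.2)
    · refine ⟨fun t => pushRetr K TL f rL hrmem e t.1, ?_, ?_, ?_, ?_⟩
      · -- monotone
        rintro ⟨s, hs⟩ ⟨t, ht⟩ hst
        obtain ⟨p, rfl⟩ : ∃ p : PushY K X, s = e p := ⟨e.symm s, (hsymm s).symm⟩
        obtain ⟨q, rfl⟩ : ∃ q : PushY K X, t = e q := ⟨e.symm t, (hsymm t).symm⟩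
        have hle : pushLE K f p q := (he _ _).mpr hst
        cases p with
        | inl zp =>
          have hzp : zp.1 ∈ TL := hs zp (Equiv.symm_apply_apply _ _)
          cases q with
          | inl zq =>
            have hzq : zq.1 ∈ TL := ht zq (Equiv.symm_apply_apply _ _)
            simp only [pushRetr_inl K TL f rL hrmem e zp hzp,
              pushRetr_inl K TL f rL hrmem e zq hzq]
            refine (he _ _).mp ?_
            show f _ ≤ f _
            exact hf (Subtype.mk_le_mk.mpr (hmL (Subtype.mk_le_mk.mpr hle)))
          | inr x => exact absurd hle id
        | inr x =>
          cases q with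
          | inl zq =>
            have hzq : zq.1 ∈ TL := ht zq (Equiv.symm_apply_apply _ _)
            obtain ⟨w, hxw, hwz⟩ := hle
            simp only [pushRetr_inr, pushRetr_inl K TL f rL hrmem e zq hzq]
            refine (he _ _).mp ?_
            show x ≤ f _
            have hw' : (w : L) ∈ TL := hKTL w.2
            have : rL ⟨w.1, hw'⟩ ≤ rL ⟨zq.1, hzq⟩ := hmL (Subtype.mk_le_mk.mpr hwz)
            have hwe : rL ⟨w.1, hw'⟩ = (w : L) := hrid ⟨w.1, hw'⟩ w.2
            have : (w : K) ≤ ⟨rL ⟨zq.1, hzq⟩, hrmem _⟩ := by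
              apply Subtype.mk_le_mk.mpr
              rw [← hwe]; exact this
            exact le_trans hxw (hf this)
          | inr x' =>
            simp only [pushRetr_inr]
            refine (he _ _).mp ?_
            exact hle
      · -- lands in A
        rintro ⟨t, ht⟩
        obtain ⟨p, rfl⟩ : ∃ p : PushY K X, t = e p := ⟨e.symm t, (hsymm t).symm⟩
        cases p with
        | inl z =>
          have hz : z.1 ∈ TL := ht z (Equiv.symm_apply_apply _ _)
          simp only [pushRetr_inl K TL f rL hrmem e z hz]
          exact ⟨_, rfl⟩
        | inr x =>
          simp only [pushRetr_inr]
          exact ⟨x, rfl⟩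
      · -- identity on A
        rintro ⟨t, ht⟩ ⟨x, hx⟩
        have hx' : e (Sum.inr x) = t := hx
        show pushRetr K TL f rL hrmem e t = t
        rw [← hx', pushRetr_inr]
      · -- r t ≤ t
        rintro ⟨t, ht⟩
        obtain ⟨p, rfl⟩ : ∃ p : PushY K X, t = e p := ⟨e.symm t, (hsymm t).symm⟩
        cases p with
        | inl z =>
          have hz : z.1 ∈ TL := ht z (Equiv.symm_apply_apply _ _)
          simp only [pushRetr_inl K TL f rL hrmem e z hz]
          show _ ≤ e (Sum.inl z)
          refine (he _ _).mp ?_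
          exact ⟨⟨rL ⟨z.1, hz⟩, hrmem _⟩, le_refl _, hrle _⟩
        | inr x =>
          show pushRetr K TL f rL hrmem e (e (Sum.inr x)) ≤ _
          rw [pushRetr_inr]
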